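/- arXiv:1601.05964 — 3 statements merged into one kernel-verified Lean document; each statement's English description precedes it below -/
import Mathlib

section
/- Let X be a compact Hausdorff space and M a unital C*-algebra with faithful tracial state τ. Let C_σ(X,M) denote the set of functions f : X → M that are bounded in the C*-norm and continuous for the 2-norm topology on M. Then C_σ(X,M) is a unital C*-subalgebra of the C*-algebra of all bounded functions X → M with the supremum norm. -/
set_option linter.unusedSectionVars false

/-- The `2`-norm `‖a‖_{2,τ} = τ(a*a)^{1/2}` associated to a tracial state `τ`. -/
noncomputable def twoNorm {M : Type*} [NormedRing M] [StarRing M] [NormedAlgebra ℂ M]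
    (τ : M →ₗ[ℂ] ℂ) (a : M) : ℝ :=
  Real.sqrt (τ (star a * a)).re

/-- `f : X → M` is continuous for the 2-norm topology on `M`. -/
def Cont2 {X M : Type*} [TopologicalSpace X] [NormedRing M] [StarRing M] [NormedAlgebra ℂ M]
    (τ : M →ₗ[ℂ] ℂ) (f : X → M) : Prop :=
  ∀ x₀ : X, ∀ ε > (0 : ℝ), ∃ U ∈ nhds x₀, ∀ x ∈ U, twoNorm τ (f x - f x₀) < ε

/-- `C_σ(X,M)`: the set of C*-norm bounded, 2-norm continuous functions `X → M`. -/
def CsigmaSet (X : Type*) {M : Type*} [TopologicalSpace X] [NormedRing M] [StarRing M]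
    [NormedAlgebra ℂ M] (τ : M →ₗ[ℂ] ℂ) : Set (X → M) :=
  {f | (∃ C : ℝ, ∀ x, ‖f x‖ ≤ C) ∧ Cont2 τ f}

namespace CsigAux

section basic

variable {M : Type*} [NormedRing M] [StarRing M] [NormedAlgebra ℂ M] [StarModule ℂ M]
    (τ : M →ₗ[ℂ] ℂ)

/-- the square of the 2-norm -/
noncomputable def tsq (a : M) : ℝ := (τ (star a * a)).re

lemma twoNorm_def (a : M) : twoNorm τ a = Real.sqrt (tsq τ a) := rfl

lemma twoNorm_nonneg (a : M) : 0 ≤ twoNorm τ a := Real.sqrt_nonneg _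

lemma tsq_zero : tsq τ (0 : M) = 0 := by simp [tsq]

lemma twoNorm_zero : twoNorm τ (0 : M) = 0 := by
  rw [twoNorm_def, tsq_zero, Real.sqrt_zero]

lemma tsq_neg (a : M) : tsq τ (-a) = tsq τ a := by simp [tsq]

lemma twoNorm_neg (a : M) : twoNorm τ (-a) = twoNorm τ a := by
  rw [twoNorm_def, tsq_neg, twoNorm_def]

lemma re_inner_swap (hstar : ∀ a : M, τ (star a) = starRingEnd ℂ (τ a)) (a b : M) :
    (τ (star b * a)).re = (τ (star a * b)).re := by
  have h : star b * a = star (star a * b) := by simp [star_mul]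
  rw [h, hstar]
  simp

lemma tsq_add (hstar : ∀ a : M, τ (star a) = starRingEnd ℂ (τ a)) (a b : M) :
    tsq τ (a + b) = tsq τ a + 2 * (τ (star a * b)).re + tsq τ b := by
  have h : star (a + b) * (a + b)
      = star a * a + (star a * b + (star b * a + star b * b)) := by
    rw [star_add]; noncomm_ring
  rw [tsq, h, map_add, map_add, map_add]
  simp only [Complex.add_re]
  rw [re_inner_swap τ hstar a b]
  unfold tsq
  ring

lemma tsq_smul (c : ℂ) (a : M) : tsq τ (c • a) = ‖c‖ ^ 2 * tsq τ a := by
  have h : star (c • a) * (c • a) = ((‖c‖ ^ 2 : ℝ) : ℂ) • (star a * a) := by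
    rw [star_smul, smul_mul_assoc, mul_smul_comm, smul_smul]
    congr 1
    rw [Complex.star_def, mul_comm, Complex.mul_conj]
    norm_cast
    simp [Complex.normSq_eq_norm_sq]
  rw [tsq, h, map_smul, smul_eq_mul, Complex.re_ofReal_mul, tsq]

lemma twoNorm_smul (c : ℂ) (a : M)
    (hpos : ∀ a : M, 0 ≤ (τ (star a * a)).re ∧ (τ (star a * a)).im = 0) :
    twoNorm τ (c • a) = ‖c‖ * twoNorm τ a := by
  rw [twoNorm_def, tsq_smul, Real.sqrt_mul (by positivity), Real.sqrt_sq (norm_nonneg c),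
    twoNorm_def]

lemma inner_smul_re (a b : M) (t : ℝ) :
    (τ (star a * ((t : ℂ) • b))).re = t * (τ (star a * b)).re := by
  rw [mul_smul_comm, map_smul, smul_eq_mul, Complex.re_ofReal_mul]

lemma re_inner_le_sqrt (hpos : ∀ a : M, 0 ≤ (τ (star a * a)).re ∧ (τ (star a * a)).im = 0)
    (hstar : ∀ a : M, τ (star a) = starRingEnd ℂ (τ a)) (a b : M) :
    (τ (star a * b)).re ≤ Real.sqrt (tsq τ a) * Real.sqrt (tsq τ b) := by
  set A := tsq τ a with hA
  set B := tsq τ b with hB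
  set R := (τ (star a * b)).re with hR
  have key : ∀ t : ℝ, 0 ≤ B * (t * t) + (2 * R) * t + A := by
    intro t
    have h0 : (0:ℝ) ≤ tsq τ (a + (t : ℂ) • b) := (hpos _).1
    rw [tsq_add τ hstar, tsq_smul, inner_smul_re] at h0
    calc (0:ℝ) ≤ A + 2 * (t * R) + ‖(t:ℂ)‖ ^ 2 * B := h0
      _ = B * (t * t) + (2 * R) * t + A := by
          rw [Complex.norm_real]
          rw [Real.norm_eq_abs, sq_abs]
          ring
  have hd := discrim_le_zero key
  rw [discrim] at hd
  have hR2 : R ^ 2 ≤ A * B := by nlinarith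
  have h1 : R ≤ Real.sqrt (R ^ 2) := by
    rw [Real.sqrt_sq_eq_abs]; exact le_abs_self R
  refine h1.trans ?_
  calc Real.sqrt (R ^ 2) ≤ Real.sqrt (A * B) := Real.sqrt_le_sqrt hR2
    _ = Real.sqrt A * Real.sqrt B := Real.sqrt_mul (hpos a).1 _

lemma twoNorm_add_le (hpos : ∀ a : M, 0 ≤ (τ (star a * a)).re ∧ (τ (star a * a)).im = 0)
    (hstar : ∀ a : M, τ (star a) = starRingEnd ℂ (τ a)) (a b : M) :
    twoNorm τ (a + b) ≤ twoNorm τ a + twoNorm τ b := by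
  simp only [twoNorm_def]
  have h1 : tsq τ (a + b) ≤ (Real.sqrt (tsq τ a) + Real.sqrt (tsq τ b)) ^ 2 := by
    rw [tsq_add τ hstar, add_sq, Real.sq_sqrt (show (0:ℝ) ≤ tsq τ a from (hpos a).1),
      Real.sq_sqrt (show (0:ℝ) ≤ tsq τ b from (hpos b).1)]
    have := re_inner_le_sqrt τ hpos hstar a b
    nlinarith
  calc Real.sqrt (tsq τ (a + b))
      ≤ Real.sqrt ((Real.sqrt (tsq τ a) + Real.sqrt (tsq τ b)) ^ 2) := Real.sqrt_le_sqrt h1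
    _ = _ := by rw [Real.sqrt_sq (by positivity)]

lemma tsq_star (htr : ∀ a b : M, τ (a * b) = τ (b * a)) (a : M) :
    tsq τ (star a) = tsq τ a := by
  rw [tsq, star_star, htr, tsq]

lemma twoNorm_star (htr : ∀ a b : M, τ (a * b) = τ (b * a)) (a : M) :
    twoNorm τ (star a) = twoNorm τ a := by
  rw [twoNorm_def, tsq_star τ htr, twoNorm_def]

end basic

section cstar

variable {M : Type*} [NormedRing M] [StarRing M] [CStarRing M] [NormedAlgebra ℂ M]
    [StarModule ℂ M] [CompleteSpace M] (τ : M →ₗ[ℂ] ℂ)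

variable (hpos : ∀ a : M, 0 ≤ (τ (star a * a)).re ∧ (τ (star a * a)).im = 0)
include hpos

lemma re_nonneg_closure {x : M}
    (hx : x ∈ AddSubmonoid.closure (Set.range fun s : M => star s * s)) :
    0 ≤ (τ x).re := by
  induction hx using AddSubmonoid.closure_induction with
  | mem s hs => obtain ⟨a, rfl⟩ := hs; exact (hpos a).1
  | zero => simp
  | add x y _ _ hx hy => rw [map_add, Complex.add_re]; positivity

omit hpos in
lemma tau_algebraMap (hτ1 : τ 1 = 1) (r : ℝ) : τ (algebraMap ℝ M r) = (r : ℂ) := by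
  rw [IsScalarTower.algebraMap_apply ℝ ℂ M, Algebra.algebraMap_eq_smul_one, map_smul, hτ1,
    smul_eq_mul, mul_one]
  simp

lemma tsq_le_normsq (hτ1 : τ 1 = 1) (a : M) : tsq τ a ≤ ‖a‖ ^ 2 := by
  letI : CStarAlgebra M := { }
  letI := CStarAlgebra.spectralOrder M
  haveI := CStarAlgebra.spectralOrderedRing M
  have h : star a * a ≤ algebraMap ℝ M (‖a‖ ^ 2) :=
    CStarAlgebra.star_mul_le_algebraMap_norm_sq
  rw [← sub_nonneg, StarOrderedRing.nonneg_iff] at h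
  have := re_nonneg_closure τ hpos h
  rw [map_sub, Complex.sub_re, sub_nonneg, tau_algebraMap τ hτ1] at this
  simpa [tsq, ← Complex.ofReal_pow] using this

lemma twoNorm_le_norm (hτ1 : τ 1 = 1) (a : M) : twoNorm τ a ≤ ‖a‖ := by
  rw [twoNorm_def]
  calc Real.sqrt (tsq τ a) ≤ Real.sqrt (‖a‖ ^ 2) := Real.sqrt_le_sqrt (tsq_le_normsq τ hpos hτ1 a)
    _ = ‖a‖ := Real.sqrt_sq (norm_nonneg a)

lemma tsq_mul_le_left (a b : M) :
    tsq τ (a * b) ≤ ‖a‖ ^ 2 * tsq τ b := by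
  letI : CStarAlgebra M := { }
  letI := CStarAlgebra.spectralOrder M
  haveI := CStarAlgebra.spectralOrderedRing M
  have h : star a * a ≤ algebraMap ℝ M (‖a‖ ^ 2) :=
    CStarAlgebra.star_mul_le_algebraMap_norm_sq
  have h2 := star_left_conjugate_le_conjugate h b
  rw [← sub_nonneg, StarOrderedRing.nonneg_iff] at h2
  have h3 := re_nonneg_closure τ hpos h2
  rw [map_sub, Complex.sub_re, sub_nonneg] at h3
  have e1 : star b * algebraMap ℝ M (‖a‖ ^ 2) * b = ((‖a‖ ^ 2 : ℝ) : ℂ) • (star b * b) := by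
    rw [IsScalarTower.algebraMap_apply ℝ ℂ M, Algebra.algebraMap_eq_smul_one]
    simp [mul_smul_comm, smul_mul_assoc]
  have e2 : star (a * b) * (a * b) = star b * (star a * a) * b := by
    simp [star_mul, mul_assoc]
  rw [e1, map_smul, smul_eq_mul, Complex.re_ofReal_mul] at h3
  rw [tsq, tsq, e2]
  exact h3

lemma tsq_mul_le_right (htr : ∀ a b : M, τ (a * b) = τ (b * a)) (a b : M) :
    tsq τ (a * b) ≤ ‖b‖ ^ 2 * tsq τ a := by
  letI : CStarAlgebra M := { }
  letI := CStarAlgebra.spectralOrder M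
  haveI := CStarAlgebra.spectralOrderedRing M
  have h : b * star b ≤ algebraMap ℝ M (‖b‖ ^ 2) :=
    CStarAlgebra.mul_star_le_algebraMap_norm_sq
  have h2 := star_right_conjugate_le_conjugate h a
  rw [← sub_nonneg, StarOrderedRing.nonneg_iff] at h2
  have h3 := re_nonneg_closure τ hpos h2
  rw [map_sub, Complex.sub_re, sub_nonneg] at h3
  have e1 : a * algebraMap ℝ M (‖b‖ ^ 2) * star a = ((‖b‖ ^ 2 : ℝ) : ℂ) • (a * star a) := by
    rw [IsScalarTower.algebraMap_apply ℝ ℂ M, Algebra.algebraMap_eq_smul_one]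
    simp [mul_smul_comm, smul_mul_assoc]
  rw [e1, map_smul, smul_eq_mul, Complex.re_ofReal_mul] at h3
  have e2 : τ (a * (b * star b) * star a) = τ (star (a * b) * (a * b)) := by
    rw [htr]
    rw [show star a * (a * (b * star b)) = (star a * a * b) * star b by
      simp only [mul_assoc]]
    rw [htr]
    congr 1
    simp [star_mul, mul_assoc]
  have e3 : τ (a * star a) = τ (star a * a) := htr a (star a)
  rw [e2, e3] at h3
  exact h3

lemma twoNorm_mul_le_left (a b : M) : twoNorm τ (a * b) ≤ ‖a‖ * twoNorm τ b := by
  rw [twoNorm_def, twoNorm_def]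
  calc Real.sqrt (tsq τ (a * b)) ≤ Real.sqrt (‖a‖ ^ 2 * tsq τ b) :=
        Real.sqrt_le_sqrt (tsq_mul_le_left τ hpos a b)
    _ = ‖a‖ * Real.sqrt (tsq τ b) := by
        rw [Real.sqrt_mul (by positivity), Real.sqrt_sq (norm_nonneg a)]

lemma twoNorm_mul_le_right (htr : ∀ a b : M, τ (a * b) = τ (b * a)) (a b : M) :
    twoNorm τ (a * b) ≤ ‖b‖ * twoNorm τ a := by
  rw [twoNorm_def, twoNorm_def]
  calc Real.sqrt (tsq τ (a * b)) ≤ Real.sqrt (‖b‖ ^ 2 * tsq τ a) :=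
        Real.sqrt_le_sqrt (tsq_mul_le_right τ hpos htr a b)
    _ = ‖b‖ * Real.sqrt (tsq τ a) := by
        rw [Real.sqrt_mul (by positivity), Real.sqrt_sq (norm_nonneg b)]

end cstar

end CsigAux

open CsigAux
/-- `C_σ(X,M)` is a unital C*-subalgebra of the bounded functions `X → M`
with the supremum norm: it contains the unit, is closed under the *-algebra operations,
and is closed under uniform (sup-norm) limits. -/
theorem stmt3 {X M : Type*} [TopologicalSpace X] [CompactSpace X] [T2Space X]
    [NormedRing M] [StarRing M] [CStarRing M] [NormedAlgebra ℂ M]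
    [StarModule ℂ M] [CompleteSpace M]
    (τ : M →ₗ[ℂ] ℂ)
    (hτ1 : τ 1 = 1)
    (htr : ∀ a b : M, τ (a * b) = τ (b * a))
    (hpos : ∀ a : M, 0 ≤ (τ (star a * a)).re ∧ (τ (star a * a)).im = 0)
    (hstar : ∀ a : M, τ (star a) = starRingEnd ℂ (τ a))
    (hfaith : ∀ a : M, τ (star a * a) = 0 → a = 0) :
    ((fun _ : X => (1 : M)) ∈ CsigmaSet X τ) ∧
    (∀ f ∈ CsigmaSet X τ, ∀ g ∈ CsigmaSet X τ, (fun x => f x + g x) ∈ CsigmaSet X τ) ∧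
    (∀ f ∈ CsigmaSet X τ, ∀ g ∈ CsigmaSet X τ, (fun x => f x * g x) ∈ CsigmaSet X τ) ∧
    (∀ f ∈ CsigmaSet X τ, (fun x => star (f x)) ∈ CsigmaSet X τ) ∧
    (∀ (c : ℂ), ∀ f ∈ CsigmaSet X τ, (fun x => c • f x) ∈ CsigmaSet X τ) ∧
    (∀ f : X → M, (∀ ε > (0 : ℝ), ∃ g ∈ CsigmaSet X τ, ∀ x, ‖f x - g x‖ ≤ ε) →
      f ∈ CsigmaSet X τ) := by
  refine ⟨⟨⟨‖(1:M)‖, fun _ => le_rfl⟩, ?_⟩, ?_, ?_, ?_, ?_, ?_⟩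
  · -- unit is 2-norm continuous
    intro x₀ ε hε
    refine ⟨Set.univ, Filter.univ_mem, fun x _ => ?_⟩
    simpa [sub_self, twoNorm_zero] using hε
  · -- addition
    rintro f ⟨⟨Cf, hCf⟩, hf⟩ g ⟨⟨Cg, hCg⟩, hg⟩
    refine ⟨⟨Cf + Cg, fun x => (norm_add_le _ _).trans (add_le_add (hCf x) (hCg x))⟩, ?_⟩
    intro x₀ ε hε
    obtain ⟨U, hU, hUf⟩ := hf x₀ (ε / 2) (by positivity)
    obtain ⟨V, hV, hVg⟩ := hg x₀ (ε / 2) (by positivity)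
    refine ⟨U ∩ V, Filter.inter_mem hU hV, fun x hx => ?_⟩
    have e : f x + g x - (f x₀ + g x₀) = (f x - f x₀) + (g x - g x₀) := by abel
    calc twoNorm τ (f x + g x - (f x₀ + g x₀))
        = twoNorm τ ((f x - f x₀) + (g x - g x₀)) := by rw [e]
      _ ≤ twoNorm τ (f x - f x₀) + twoNorm τ (g x - g x₀) := twoNorm_add_le τ hpos hstar _ _
      _ < ε / 2 + ε / 2 := add_lt_add (hUf x hx.1) (hVg x hx.2)
      _ = ε := by ring
  · -- multiplication
    rintro f ⟨⟨Cf, hCf⟩, hf⟩ g ⟨⟨Cg, hCg⟩, hg⟩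
    refine ⟨⟨max Cf 0 * max Cg 0, fun x => ?_⟩, ?_⟩
    · calc ‖f x * g x‖ ≤ ‖f x‖ * ‖g x‖ := norm_mul_le _ _
        _ ≤ max Cf 0 * max Cg 0 :=
          mul_le_mul ((hCf x).trans (le_max_left _ _)) ((hCg x).trans (le_max_left _ _))
            (norm_nonneg _) (le_max_right _ _)
    · intro x₀ ε hε
      set D := max Cf 0 + ‖g x₀‖ + 1 with hD
      have hD0 : 0 < D := by positivity
      obtain ⟨U, hU, hUf⟩ := hf x₀ (ε / D) (by positivity)
      obtain ⟨V, hV, hVg⟩ := hg x₀ (ε / D) (by positivity)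
      refine ⟨U ∩ V, Filter.inter_mem hU hV, fun x hx => ?_⟩
      have e : f x * g x - f x₀ * g x₀ = f x * (g x - g x₀) + (f x - f x₀) * g x₀ := by
        noncomm_ring
      have h1 : twoNorm τ (f x * (g x - g x₀)) ≤ ‖f x‖ * twoNorm τ (g x - g x₀) :=
        twoNorm_mul_le_left τ hpos _ _
      have h2 : twoNorm τ ((f x - f x₀) * g x₀) ≤ ‖g x₀‖ * twoNorm τ (f x - f x₀) :=
        twoNorm_mul_le_right τ hpos htr _ _
      have hfx : ‖f x‖ ≤ max Cf 0 := (hCf x).trans (le_max_left _ _)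
      have hg' : twoNorm τ (g x - g x₀) < ε / D := hVg x hx.2
      have hf' : twoNorm τ (f x - f x₀) < ε / D := hUf x hx.1
      have hgn0 : (0:ℝ) ≤ twoNorm τ (g x - g x₀) := twoNorm_nonneg τ _
      have hfn0 : (0:ℝ) ≤ twoNorm τ (f x - f x₀) := twoNorm_nonneg τ _
      have hgx0 : (0:ℝ) ≤ ‖g x₀‖ := norm_nonneg _
      have hc0 : (0:ℝ) ≤ max Cf 0 := le_max_right _ _
      have hDε : D * (ε / D) = ε := mul_div_cancel₀ ε hD0.ne'
      calc twoNorm τ (f x * g x - f x₀ * g x₀)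
          = twoNorm τ (f x * (g x - g x₀) + (f x - f x₀) * g x₀) := by rw [e]
        _ ≤ twoNorm τ (f x * (g x - g x₀)) + twoNorm τ ((f x - f x₀) * g x₀) :=
            twoNorm_add_le τ hpos hstar _ _
        _ ≤ ‖f x‖ * twoNorm τ (g x - g x₀) + ‖g x₀‖ * twoNorm τ (f x - f x₀) :=
            add_le_add h1 h2
        _ ≤ max Cf 0 * twoNorm τ (g x - g x₀) + ‖g x₀‖ * twoNorm τ (f x - f x₀) := by
            gcongr
        _ < D * (ε / D) := by nlinarith
        _ = ε := hDε
  · -- star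
    rintro f ⟨⟨Cf, hCf⟩, hf⟩
    refine ⟨⟨Cf, fun x => by rw [norm_star]; exact hCf x⟩, ?_⟩
    intro x₀ ε hε
    obtain ⟨U, hU, hUf⟩ := hf x₀ ε hε
    refine ⟨U, hU, fun x hx => ?_⟩
    have e : star (f x) - star (f x₀) = star (f x - f x₀) := by rw [star_sub]
    rw [e, twoNorm_star τ htr]
    exact hUf x hx
  · -- scalar multiplication
    rintro c f ⟨⟨Cf, hCf⟩, hf⟩
    refine ⟨⟨‖c‖ * max Cf 0, fun x => by
      rw [norm_smul]
      exact mul_le_mul_of_nonneg_left ((hCf x).trans (le_max_left _ _)) (norm_nonneg c)⟩, ?_⟩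
    intro x₀ ε hε
    obtain ⟨U, hU, hUf⟩ := hf x₀ (ε / (‖c‖ + 1)) (by positivity)
    refine ⟨U, hU, fun x hx => ?_⟩
    have e : c • f x - c • f x₀ = c • (f x - f x₀) := by rw [smul_sub]
    rw [e, twoNorm_smul τ c _ hpos]
    have hn : (0:ℝ) ≤ twoNorm τ (f x - f x₀) := twoNorm_nonneg τ _
    have h1 : ‖c‖ * twoNorm τ (f x - f x₀) ≤ (‖c‖ + 1) * twoNorm τ (f x - f x₀) := by
      gcongr; linarith
    have h2 : (‖c‖ + 1) * twoNorm τ (f x - f x₀) < (‖c‖ + 1) * (ε / (‖c‖ + 1)) := by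
      have : (0:ℝ) < ‖c‖ + 1 := by positivity
      exact mul_lt_mul_of_pos_left (hUf x hx) this
    have h3 : (‖c‖ + 1) * (ε / (‖c‖ + 1)) = ε :=
      mul_div_cancel₀ ε (by positivity)
    linarith
  · -- uniform limits
    intro f hlim
    obtain ⟨g1, ⟨⟨C1, hC1⟩, _⟩, hg1⟩ := hlim 1 one_pos
    refine ⟨⟨C1 + 1, fun x => ?_⟩, ?_⟩
    · calc ‖f x‖ = ‖f x - g1 x + g1 x‖ := by rw [sub_add_cancel]
        _ ≤ ‖f x - g1 x‖ + ‖g1 x‖ := norm_add_le _ _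
        _ ≤ 1 + C1 := add_le_add (hg1 x) (hC1 x)
        _ = C1 + 1 := by ring
    · intro x₀ ε hε
      obtain ⟨g, ⟨_, hgc⟩, hgf⟩ := hlim (ε / 4) (by positivity)
      obtain ⟨U, hU, hUg⟩ := hgc x₀ (ε / 4) (by positivity)
      refine ⟨U, hU, fun x hx => ?_⟩
      have e : f x - f x₀ = (f x - g x) + ((g x - g x₀) + (g x₀ - f x₀)) := by abel
      have t1 : twoNorm τ (f x - g x) ≤ ε / 4 :=
        (twoNorm_le_norm τ hpos hτ1 _).trans (hgf x)
      have t3 : twoNorm τ (g x₀ - f x₀) ≤ ε / 4 := by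
        have : g x₀ - f x₀ = -(f x₀ - g x₀) := by abel
        rw [this, twoNorm_neg]
        exact (twoNorm_le_norm τ hpos hτ1 _).trans (hgf x₀)
      have t2 : twoNorm τ (g x - g x₀) < ε / 4 := hUg x hx
      calc twoNorm τ (f x - f x₀)
          = twoNorm τ ((f x - g x) + ((g x - g x₀) + (g x₀ - f x₀))) := by rw [e]
        _ ≤ twoNorm τ (f x - g x) + twoNorm τ ((g x - g x₀) + (g x₀ - f x₀)) :=
            twoNorm_add_le τ hpos hstar _ _
        _ ≤ twoNorm τ (f x - g x) +
              (twoNorm τ (g x - g x₀) + twoNorm τ (g x₀ - f x₀)) := by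
            have := twoNorm_add_le τ hpos hstar (g x - g x₀) (g x₀ - f x₀)
            linarith
        _ < ε := by linarith
end

section
/- Let M be a W*-bundle over a compact Hausdorff space X with conditional expectation E, and let Y ⊆ X be closed. Set I_Y = {a ∈ M : E(a*a)(y) = 0 for all y ∈ Y}. Then I_Y is a closed two-sided ideal of M, I_Y = ⋂_{y∈Y} I_y, C(X) ∩ I_Y = C_0(X∖Y), and E maps I_Y into C_0(X∖Y), so E induces a conditional expectation E_Y : M/I_Y → C(X)/C_0(X∖Y) ≅ C(Y). -/
/-- The kernel `I_x = {a ∈ M : E(a*a)(x) = 0}`. -/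
def fibKer {X M : Type*} [TopologicalSpace X] [CompactSpace X] [NormedRing M] [StarRing M]
    [NormedAlgebra ℂ M] (E : M →ₗ[ℂ] C(X, ℂ)) (x : X) : Set M :=
  {a | E (star a * a) x = 0}

/-- The ideal `I_Y = {a ∈ M : E(a*a)(y) = 0 for all y ∈ Y}`. -/
def resKer {X M : Type*} [TopologicalSpace X] [CompactSpace X] [NormedRing M] [StarRing M]
    [NormedAlgebra ℂ M] (E : M →ₗ[ℂ] C(X, ℂ)) (Y : Set X) : Set M :=
  {a | ∀ y ∈ Y, E (star a * a) y = 0}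

set_option maxHeartbeats 1000000 in
/-- Cauchy–Schwarz degenerate case: if the positive sesquilinear form
`(a, b) ↦ E (star a * b) x` vanishes at `(a, a)`, then it vanishes at `(a, b)` for all `b`. -/
lemma cs_vanish {X M : Type*} [TopologicalSpace X] [CompactSpace X]
    [NormedRing M] [StarRing M] [NormedAlgebra ℂ M] [StarModule ℂ M]
    (E : M →ₗ[ℂ] C(X, ℂ))
    (hpos : ∀ (a : M) (x : X), 0 ≤ (E (star a * a) x).re ∧ (E (star a * a) x).im = 0)
    (hstar : ∀ a : M, E (star a) = star (E a))
    (x : X) (a b : M) (ha : E (star a * a) x = 0) : E (star a * b) x = 0 := by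
  set z : ℂ := E (star a * b) x with hz
  by_contra hz0
  have hzsq : Complex.normSq z ≠ 0 := fun h => hz0 (Complex.normSq_eq_zero.mp h)
  have hconj : E (star b * a) x = starRingEnd ℂ z := by
    have : star b * a = star (star a * b) := by simp [star_mul]
    rw [this, hstar, ContinuousMap.star_apply]
    rfl
  set w : ℂ := E (star b * b) x with hw
  -- pick t = -s • z with s = (w.re + 1)/(2 * normSq z)
  set s : ℝ := (w.re + 1) / (2 * Complex.normSq z) with hs
  set t : ℂ := -(s : ℂ) * z with ht
  have expand : star (t • a + b) * (t • a + b)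
      = (t * starRingEnd ℂ t) • (star a * a) + (starRingEnd ℂ t) • (star a * b)
        + t • (star b * a) + star b * b := by
    simp only [star_add, star_smul, add_mul, mul_add, smul_mul_assoc, mul_smul_comm, smul_smul, smul_add,
      Complex.star_def]
    abel
  have hEval : E (star (t • a + b) * (t • a + b)) x
      = starRingEnd ℂ t * z + t * starRingEnd ℂ z + w := by
    rw [expand]
    simp only [map_add, map_smul, ContinuousMap.add_apply, ContinuousMap.smul_apply,
      smul_eq_mul, ← hz, ha, hconj, ← hw]
    ring
  have hre := (hpos (t • a + b) x).1
  rw [hEval] at hre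
  have h1 : starRingEnd ℂ t * z + t * starRingEnd ℂ z
      = ((2 * (t * starRingEnd ℂ z).re : ℝ) : ℂ) := by
    have := Complex.add_conj (t * starRingEnd ℂ z)
    rw [map_mul, Complex.conj_conj] at this
    rw [← this]
    ring
  have h2 : (t * starRingEnd ℂ z) = -(s : ℂ) * (Complex.normSq z : ℂ) := by
    rw [ht, mul_assoc, Complex.mul_conj]
  have h3 : (t * starRingEnd ℂ z).re = -s * Complex.normSq z := by
    rw [h2]
    simp [← Complex.ofReal_mul, ← Complex.ofReal_neg]
  rw [h1] at hre
  have hre' : 0 ≤ 2 * (-s * Complex.normSq z) + w.re := by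
    simpa [h3] using hre
  have hcalc : 2 * (-s * Complex.normSq z) = -(w.re + 1) := by
    rw [hs]
    field_simp
  rw [hcalc] at hre'
  linarith

/-- for a closed `Y ⊆ X`, `I_Y` is a closed two-sided ideal, equal to
`⋂_{y ∈ Y} I_y`; under the central embedding `ι : C(X) → M` one has
`C(X) ∩ I_Y = C_0(X∖Y)`, and `E` maps `I_Y` into `C_0(X∖Y)` (so `E` induces a
conditional expectation `E_Y : M/I_Y → C(Y)`). -/
theorem stmt10 {X M : Type*} [TopologicalSpace X] [CompactSpace X] [T2Space X]
    [NormedRing M] [StarRing M] [CStarRing M] [NormedAlgebra ℂ M]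
    [StarModule ℂ M] [CompleteSpace M]
    (E : M →ₗ[ℂ] C(X, ℂ))
    (hE1 : E 1 = 1)
    (htr : ∀ a b : M, E (a * b) = E (b * a))
    (hpos : ∀ (a : M) (x : X), 0 ≤ (E (star a * a) x).re ∧ (E (star a * a) x).im = 0)
    (hstar : ∀ a : M, E (star a) = star (E a))
    (hfaith : ∀ a : M, E (star a * a) = 0 → a = 0)
    (hcontr : ∀ a : M, ‖E a‖ ≤ ‖a‖)
    -- the central unital embedding of C(X)
    (ι : C(X, ℂ) →⋆ₐ[ℂ] M)
    (hcentral : ∀ (h : C(X, ℂ)) (a : M), ι h * a = a * ι h)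
    (hEι : ∀ h : C(X, ℂ), E (ι h) = h)
    (hmodule : ∀ (h : C(X, ℂ)) (a : M), E (ι h * a) = h * E a)
    (Y : Set X) (hY : IsClosed Y) :
    IsClosed (resKer E Y) ∧
    ((0 : M) ∈ resKer E Y ∧
      (∀ a ∈ resKer E Y, ∀ b ∈ resKer E Y, a + b ∈ resKer E Y) ∧
      (∀ a ∈ resKer E Y, ∀ m : M, m * a ∈ resKer E Y ∧ a * m ∈ resKer E Y)) ∧
    (resKer E Y = ⋂ y ∈ Y, fibKer E y) ∧
    (∀ h : C(X, ℂ), ι h ∈ resKer E Y ↔ ∀ y ∈ Y, h y = 0) ∧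
    (∀ a ∈ resKer E Y, ∀ y ∈ Y, E a y = 0) := by
  letI : CStarAlgebra M := ⟨⟩
  letI := CStarAlgebra.spectralOrder M
  haveI := CStarAlgebra.spectralOrderedRing M
  -- continuity of E
  have hEcont : Continuous E :=
    AddMonoidHomClass.continuous_of_bound E 1 (fun a => by simpa using hcontr a)
  -- fib kernels are closed
  have hfib : ∀ x : X, IsClosed (fibKer E x) := by
    intro x
    have hc : Continuous fun a : M => E (star a * a) x :=
      (continuous_eval_const x).comp
        (hEcont.comp ((continuous_star).mul continuous_id))
    exact isClosed_singleton.preimage hc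
  have hInter : resKer E Y = ⋂ y ∈ Y, fibKer E y := by
    ext a
    simp [resKer, fibKer, Set.mem_iInter]
  -- left multiplication stability
  have hleft : ∀ a ∈ resKer E Y, ∀ m : M, m * a ∈ resKer E Y := by
    intro a ha m y hy
    -- star m * m ≤ ‖m‖² • 1, write the difference as star d * d
    have hle : star m * m ≤ algebraMap ℝ M (‖m‖ ^ 2) :=
      CStarAlgebra.star_mul_le_algebraMap_norm_sq
    set p : M := algebraMap ℝ M (‖m‖ ^ 2) - star m * m with hp
    have hpnn : (0 : M) ≤ p := sub_nonneg.mpr hle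
    have hd : CFC.sqrt p * CFC.sqrt p = p := CFC.sqrt_mul_sqrt_self p hpnn
    have hdsa : star (CFC.sqrt p) = CFC.sqrt p :=
      (IsSelfAdjoint.of_nonneg (CFC.sqrt_nonneg (a := p)))
    set c : M := CFC.sqrt p * a with hc
    have hkey : star c * c = ((‖m‖ ^ 2 : ℝ) : ℂ) • (star a * a) - star (m * a) * (m * a) := by
      have halg : algebraMap ℝ M (‖m‖ ^ 2) = ((‖m‖ ^ 2 : ℝ) : ℂ) • (1 : M) := by
        rw [Algebra.algebraMap_eq_smul_one, ← algebraMap_smul (R := ℝ) ℂ (‖m‖ ^ 2) (1 : M)]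
        rfl
      rw [hc, star_mul, hdsa, mul_assoc, ← mul_assoc (CFC.sqrt p), hd, hp, halg, star_mul]
      simp only [sub_mul, mul_sub, smul_mul_assoc, mul_smul_comm, mul_one, one_mul]
      noncomm_ring
    have hE0 : E (star c * c) y
        = ((‖m‖ ^ 2 : ℝ) : ℂ) * E (star a * a) y - E (star (m * a) * (m * a)) y := by
      rw [hkey]
      simp [map_sub, map_smul]
    have hcpos := hpos c y
    have hmapos := hpos (m * a) y
    rw [hE0, ha y hy] at hcpos
    have hre : (E (star (m * a) * (m * a)) y).re = 0 := by
      have h1 := hcpos.1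
      simp only [mul_zero, zero_sub, Complex.neg_re] at h1
      linarith [hmapos.1]
    exact Complex.ext (by simpa using hre) (by simpa using hmapos.2)
  -- resKer is star-closed
  have hstarmem : ∀ a ∈ resKer E Y, star a ∈ resKer E Y := by
    intro a ha y hy
    have : star (star a) * star a = a * star a := by rw [star_star]
    rw [this, htr]
    exact ha y hy
  -- right multiplication stability
  have hright : ∀ a ∈ resKer E Y, ∀ m : M, a * m ∈ resKer E Y := by
    intro a ha m
    have h1 : star m * star a ∈ resKer E Y := hleft (star a) (hstarmem a ha) (star m)
    have h2 : star (star m * star a) ∈ resKer E Y := hstarmem _ h1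
    simpa [star_mul] using h2
  refine ⟨?_, ⟨?_, ?_, ?_⟩, hInter, ?_, ?_⟩
  · rw [hInter]
    exact isClosed_biInter fun y _ => hfib y
  · intro y hy; simp [resKer]
  · -- additivity via Cauchy–Schwarz
    intro a ha b hb y hy
    have hab : E (star a * b) y = 0 := cs_vanish E hpos hstar y a b (ha y hy)
    have hba : E (star b * a) y = 0 := cs_vanish E hpos hstar y b a (hb y hy)
    have : star (a + b) * (a + b) = star a * a + star a * b + star b * a + star b * b := by
      rw [star_add]; noncomm_ring
    rw [this]
    simp [map_add, ha y hy, hb y hy, hab, hba]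
  · intro a ha m
    exact ⟨hleft a ha m, hright a ha m⟩
  · intro h
    have hval : ∀ y : X, E (star (ι h) * ι h) y = (Complex.normSq (h y) : ℂ) := by
      intro y
      rw [← map_star, ← map_mul, hEι]
      simp [Complex.normSq_eq_conj_mul_self]
    constructor
    · intro hmem y hy
      have := hmem y hy
      rw [hval y] at this
      exact Complex.normSq_eq_zero.mp (by exact_mod_cast this)
    · intro h0 y hy
      rw [hval y, h0 y hy]
      simp
  · intro a ha y hy
    have h1 : E (star a * 1) y = 0 := cs_vanish E hpos hstar y a 1 (ha y hy)
    rw [mul_one, hstar, ContinuousMap.star_apply] at h1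
    exact star_eq_zero.mp h1
end

section
/- Let (B,p) be a topological bundle of tracial von Neumann algebras over a compact Hausdorff space X (axioms (i)–(viii)), and let s_n : X → B be bounded continuous sections converging to a bounded section s : X → B in the uniform 2-norm, i.e. sup_{x∈X} ‖s_n(x) − s(x)‖_2 → 0. Then s is continuous. -/
/-- let `(B, p)` be a topological bundle of tracial von Neumann algebras over
a compact Hausdorff space `X` (fibrewise *-algebra operations `add`, `smul`, `mul`, `star'`,
zero and unit sections, trace `tr`, 2-norm `n2` and C*-norm `cn` satisfying axioms
(i)–(viii)), and let `s n` be bounded continuous sections converging in the uniform 2-norm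
to a bounded section `t`. Then `t` is continuous. -/
theorem stmt16 {X B : Type*} [TopologicalSpace X] [CompactSpace X] [T2Space X]
    [TopologicalSpace B]
    (p : B → X) (hp : Continuous p) (hsurj : Function.Surjective p)
    (add : B → B → B) (smul : ℂ → B → B) (mul : B → B → B) (star' : B → B)
    (zero one : X → B) (tr : B → ℂ) (n2 : B → ℝ) (cn : B → ℝ)
    -- the operations preserve fibres
    (hp_add : ∀ b₁ b₂ : B, p b₁ = p b₂ → p (add b₁ b₂) = p b₁)
    (hp_smul : ∀ (c : ℂ) (b : B), p (smul c b) = p b)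
    (hp_mul : ∀ b₁ b₂ : B, p b₁ = p b₂ → p (mul b₁ b₂) = p b₁)
    (hp_star : ∀ b : B, p (star' b) = p b)
    (hp_zero : ∀ x : X, p (zero x) = x) (hp_one : ∀ x : X, p (one x) = x)
    -- fibrewise additive structure
    (hadd_comm : ∀ b₁ b₂ : B, p b₁ = p b₂ → add b₁ b₂ = add b₂ b₁)
    (hadd_assoc : ∀ b₁ b₂ b₃ : B, p b₁ = p b₂ → p b₂ = p b₃ →
      add (add b₁ b₂) b₃ = add b₁ (add b₂ b₃))
    (hadd_zero : ∀ b : B, add b (zero (p b)) = b)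
    (hadd_neg : ∀ b : B, add b (smul (-1) b) = zero (p b))
    (hsmul_one : ∀ b : B, smul 1 b = b)
    (hsmul_mul : ∀ (c c' : ℂ) (b : B), smul c (smul c' b) = smul (c * c') b)
    -- fibrewise norm and trace compatibility
    (hn2_zero : ∀ x : X, n2 (zero x) = 0)
    (hn2_add : ∀ b₁ b₂ : B, p b₁ = p b₂ → n2 (add b₁ b₂) ≤ n2 b₁ + n2 b₂)
    (hn2_smul : ∀ (c : ℂ) (b : B), n2 (smul c b) = ‖c‖ * n2 b)
    (hn2_le_cn : ∀ b : B, n2 b ≤ cn b)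
    (hcn_nonneg : ∀ b : B, 0 ≤ cn b)
    (htr_n2 : ∀ b : B, ‖tr b‖ ≤ n2 b)
    -- axiom (i): addition is continuous on B ×_p B
    (hi : Continuous fun q : {q : B × B // p q.1 = p q.2} => add q.1.1 q.1.2)
    -- axiom (ii): scalar multiplication is continuous
    (hii : Continuous fun q : ℂ × B => smul q.1 q.2)
    -- axiom (iii): the involution is continuous
    (hiii : Continuous star')
    -- axiom (iv): the zero and unit sections are continuous
    (hiv : Continuous zero ∧ Continuous one)
    -- axiom (v): the trace and the 2-norm are continuous
    (hv : Continuous tr ∧ Continuous n2)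
    -- axiom (vi): nets with p(b_λ) → x and ‖b_λ‖₂ → 0 converge to 0_x
    (hvi : ∀ (ι : Type) (l : Filter ι) (b : ι → B) (x : X),
      Filter.Tendsto (fun i => p (b i)) l (nhds x) →
      Filter.Tendsto (fun i => n2 (b i)) l (nhds 0) →
      Filter.Tendsto b l (nhds (zero x)))
    -- axiom (vii): multiplication is continuous on C*-norm bounded subsets
    (hvii : ∀ K : ℝ, ContinuousOn (fun q : {q : B × B // p q.1 = p q.2} => mul q.1.1 q.1.2)
      {q | cn q.1.1 ≤ K ∧ cn q.1.2 ≤ K})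
    -- axiom (viii): p restricted to the C*-norm unit ball is open
    (hviii : ∀ W : Set B, IsOpen W → IsOpen (p '' (W ∩ {b | cn b ≤ 1})))
    -- the sections s n are bounded and continuous
    (s : ℕ → X → B) (hs_sec : ∀ n x, p (s n x) = x)
    (hs_cont : ∀ n, Continuous (s n))
    (hs_bdd : ∀ n, ∃ C : ℝ, ∀ x, cn (s n x) ≤ C)
    -- t is a bounded section
    (t : X → B) (ht_sec : ∀ x, p (t x) = x) (ht_bdd : ∃ C : ℝ, ∀ x, cn (t x) ≤ C)
    -- s n → t in the uniform 2-norm: sup_x ‖s n x − t x‖₂ → 0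
    (hconv : ∀ ε > (0 : ℝ), ∃ N, ∀ n ≥ N, ∀ x, n2 (add (s n x) (smul (-1) (t x))) < ε) :
    Continuous t := by
  classical
  -- fibrewise algebra helper lemmas
  have zero_add : ∀ (b : B) (x : X), p b = x → add (zero x) b = b := by
    intro b x h
    rw [hadd_comm (zero x) b (by rw [hp_zero, h]), ← h, hadd_zero]
  -- a + (b - a) = b
  have lemA : ∀ a b : B, p a = p b → add a (add b (smul (-1) a)) = b := by
    intro a b hab
    calc add a (add b (smul (-1) a))
        = add a (add (smul (-1) a) b) := by
          rw [hadd_comm b (smul (-1) a) (by rw [hp_smul]; exact hab.symm)]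
      _ = add (add a (smul (-1) a)) b :=
          (hadd_assoc a (smul (-1) a) b (by rw [hp_smul]) (by rw [hp_smul]; exact hab)).symm
      _ = add (zero (p a)) b := by rw [hadd_neg]
      _ = b := zero_add b (p a) hab.symm
  -- (a - b) + b = a
  have lemF : ∀ a b : B, p a = p b → add (add a (smul (-1) b)) b = a := by
    intro a b hab
    calc add (add a (smul (-1) b)) b
        = add a (add (smul (-1) b) b) :=
          hadd_assoc a (smul (-1) b) b (by rw [hp_smul]; exact hab) (by rw [hp_smul])
      _ = add a (add b (smul (-1) b)) := by rw [hadd_comm (smul (-1) b) b (by rw [hp_smul])]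
      _ = add a (zero (p b)) := by rw [hadd_neg]
      _ = a := by rw [← hab, hadd_zero]
  -- uniqueness of additive inverse
  have lemD : ∀ u v : B, p u = p v → add u v = zero (p u) → v = smul (-1) u := by
    intro u v huv h
    calc v = add v (zero (p v)) := (hadd_zero v).symm
      _ = add v (add u (smul (-1) u)) := by rw [← huv, ← hadd_neg u]
      _ = add (add v u) (smul (-1) u) :=
          (hadd_assoc v u (smul (-1) u) huv.symm (by rw [hp_smul])).symm
      _ = add (add u v) (smul (-1) u) := by rw [hadd_comm v u huv.symm]
      _ = add (zero (p u)) (smul (-1) u) := by rw [h]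
      _ = smul (-1) u := zero_add (smul (-1) u) (p u) (by rw [hp_smul])
  -- b - a = -(a - b)
  have lemC : ∀ a b : B, p a = p b →
      add b (smul (-1) a) = smul (-1) (add a (smul (-1) b)) := by
    intro a b hab
    have hu : p (add a (smul (-1) b)) = p a := hp_add a _ (by rw [hp_smul]; exact hab)
    have hv' : p (add b (smul (-1) a)) = p b := hp_add b _ (by rw [hp_smul]; exact hab.symm)
    refine lemD _ _ (by rw [hu, hv']; exact hab) ?_
    calc add (add a (smul (-1) b)) (add b (smul (-1) a))
        = add a (add (smul (-1) b) (add b (smul (-1) a))) :=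
          hadd_assoc a (smul (-1) b) (add b (smul (-1) a))
            (by rw [hp_smul]; exact hab) (by rw [hp_smul, hv'])
      _ = add a (add (add (smul (-1) b) b) (smul (-1) a)) := by
          rw [hadd_assoc (smul (-1) b) b (smul (-1) a) (by rw [hp_smul])
            (by rw [hp_smul]; exact hab.symm)]
      _ = add a (add (add b (smul (-1) b)) (smul (-1) a)) := by
          rw [hadd_comm (smul (-1) b) b (by rw [hp_smul])]
      _ = add a (add (zero (p b)) (smul (-1) a)) := by rw [hadd_neg b]
      _ = add a (smul (-1) a) := by
          rw [zero_add (smul (-1) a) (p b) (by rw [hp_smul]; exact hab)]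
      _ = zero (p a) := hadd_neg a
      _ = zero (p (add a (smul (-1) b))) := by rw [hu]
  have hn2_nonneg : ∀ b : B, 0 ≤ n2 b := fun b =>
    le_trans (norm_nonneg _) (htr_n2 b)
  have hn2_sym : ∀ a b : B, p a = p b →
      n2 (add b (smul (-1) a)) = n2 (add a (smul (-1) b)) := by
    intro a b hab
    rw [lemC a b hab, hn2_smul]
    norm_num
  -- pointwise (topological) convergence of the sections
  have hpt : ∀ x : X, Filter.Tendsto (fun m => s m x) Filter.atTop (nhds (t x)) := by
    intro x
    set d : ℕ → B := fun m => add (s m x) (smul (-1) (t x)) with hd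
    have hpd : ∀ m, p (d m) = x := by
      intro m
      rw [hd]
      rw [hp_add (s m x) (smul (-1) (t x)) (by rw [hp_smul, hs_sec, ht_sec]), hs_sec]
    have hd0 : Filter.Tendsto d Filter.atTop (nhds (zero x)) := by
      apply hvi ℕ Filter.atTop d x
      · simp only [hpd]; exact tendsto_const_nhds
      · rw [Metric.tendsto_atTop]
        intro ε hε
        obtain ⟨N, hN⟩ := hconv ε hε
        refine ⟨N, fun n hn => ?_⟩
        rw [Real.dist_eq, sub_zero, abs_of_nonneg (hn2_nonneg _)]
        exact hN n hn x
    -- s m x = (d m) + t x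
    have hq : Filter.Tendsto
        (fun m => (⟨(d m, t x), by rw [hpd, ht_sec]⟩ : {q : B × B // p q.1 = p q.2}))
        Filter.atTop (nhds ⟨(zero x, t x), by rw [hp_zero, ht_sec]⟩) := by
      rw [tendsto_subtype_rng]
      exact hd0.prodMk_nhds tendsto_const_nhds
    have := (hi.tendsto _).comp hq
    simp only [Function.comp] at this
    have heq : ∀ m, add (d m) (t x) = s m x := by
      intro m
      exact lemF (s m x) (t x) (by rw [hs_sec, ht_sec])
    have hz : add (zero x) (t x) = t x := zero_add (t x) x (ht_sec x)
    rw [hz] at this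
    exact this.congr heq
  -- the tube lemma around the zero section
  have tube : ∀ O : Set B, IsOpen O → (∀ x, zero x ∈ O) →
      ∃ ε > (0 : ℝ), ∀ b : B, n2 b < ε → b ∈ O := by
    intro O hO hzO
    by_contra hcon
    push_neg at hcon
    have hsel : ∀ k : ℕ, ∃ b : B, n2 b < 1 / (k + 1) ∧ b ∉ O := by
      intro k
      obtain ⟨b, hb1, hb2⟩ := hcon (1 / (k + 1)) (by positivity)
      exact ⟨b, hb1, hb2⟩
    choose b hb1 hb2 using hsel
    -- a cluster point of p ∘ b
    have : Filter.NeBot (Filter.map (fun k => p (b k)) Filter.atTop) :=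
      Filter.NeBot.map Filter.atTop_neBot _
    obtain ⟨x₀, -, hcl⟩ := isCompact_univ (f := Filter.map (fun k => p (b k)) Filter.atTop)
      (Filter.le_principal_iff.2 (by simp))
    set l' : Filter ℕ := Filter.atTop ⊓ Filter.comap (fun k => p (b k)) (nhds x₀) with hl'
    have hne : l'.NeBot := by
      rw [hl', Filter.inf_neBot_iff]
      intro S hS T hT
      obtain ⟨T', hT', hT'sub⟩ := Filter.mem_comap.1 hT
      have h1 : ((fun k => p (b k)) '' S) ∈ Filter.map (fun k => p (b k)) Filter.atTop := by
        apply Filter.image_mem_map hS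
      have h2 := hcl
      rw [clusterPt_iff_nonempty] at h2
      obtain ⟨y, hy1, hy2⟩ := h2 hT' h1
      obtain ⟨k, hk, hk2⟩ := hy2
      refine ⟨k, hk, hT'sub ?_⟩
      show p (b k) ∈ T'
      rw [show p (b k) = y from hk2]
      exact hy1
    have hb0 : Filter.Tendsto b l' (nhds (zero x₀)) := by
      apply hvi ℕ l' b x₀
      · exact (Filter.tendsto_comap).mono_left inf_le_right
      · apply Filter.Tendsto.mono_left _ (inf_le_left : l' ≤ Filter.atTop)
        apply squeeze_zero (fun k => hn2_nonneg (b k)) (fun k => le_of_lt (hb1 k))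
        exact tendsto_one_div_add_atTop_nhds_zero_nat
    have : ∀ᶠ k in l', b k ∈ O := hb0.eventually (hO.mem_nhds (hzO x₀))
    obtain ⟨k, hk⟩ := this.exists
    exact hb2 k hk
  -- main proof of continuity
  rw [continuous_iff_continuousAt]
  intro x₀
  intro U hU
  rw [Filter.mem_map]
  -- continuity of addition at (t x₀, zero x₀)
  have hz₀ : p (t x₀) = p (zero x₀) := by rw [ht_sec, hp_zero]
  have hgz : add (t x₀) (zero x₀) = t x₀ := by
    have := hadd_zero (t x₀); rwa [ht_sec] at this
  have hct : Filter.Tendsto (fun q : {q : B × B // p q.1 = p q.2} => add q.1.1 q.1.2)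
      (nhds ⟨(t x₀, zero x₀), hz₀⟩) (nhds (t x₀)) := by
    have := hi.tendsto (⟨(t x₀, zero x₀), hz₀⟩ : {q : B × B // p q.1 = p q.2})
    simpa [hgz] using this
  have hUpre := hct hU
  rw [Filter.mem_map, nhds_subtype_eq_comap, Filter.mem_comap] at hUpre
  obtain ⟨S, hS, hSsub⟩ := hUpre
  rw [mem_nhds_prod_iff] at hS
  obtain ⟨U₁, hU₁, U₂, hU₂, hprod⟩ := hS
  -- the key property of U₁, U₂
  have key : ∀ b₁ b₂ : B, b₁ ∈ U₁ → b₂ ∈ U₂ → p b₁ = p b₂ → add b₁ b₂ ∈ U := by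
    intro b₁ b₂ h1 h2 hpe
    exact hSsub (by exact hprod (Set.mk_mem_prod h1 h2) :
      ((⟨(b₁, b₂), hpe⟩ : {q : B × B // p q.1 = p q.2}) : B × B) ∈ S)
  -- find a closed neighbourhood K of x₀ on which the zero section is in int U₂
  have hF : (zero ⁻¹' interior U₂) ∈ nhds x₀ := by
    apply hiv.1.continuousAt
    exact (isOpen_interior.mem_nhds (mem_interior_iff_mem_nhds.2 hU₂))
  obtain ⟨K, hK, hKclosed, hKsub⟩ := exists_mem_nhds_isClosed_subset hF
  -- the global open set O around the zero section
  set O : Set B := interior U₂ ∪ p ⁻¹' Kᶜ with hOdef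
  have hOopen : IsOpen O := isOpen_interior.union (hKclosed.isOpen_compl.preimage hp)
  have hOzero : ∀ x, zero x ∈ O := by
    intro x
    by_cases hx : x ∈ K
    · exact Or.inl (hKsub hx)
    · exact Or.inr (by simp only [Set.mem_preimage, hp_zero]; exact hx)
  obtain ⟨ε, hε, htube⟩ := tube O hOopen hOzero
  -- uniform smallness of t x - s m x
  obtain ⟨N, hN⟩ := hconv ε hε
  -- pick M ≥ N with s M x₀ ∈ interior U₁
  have hU₁int : t x₀ ∈ interior U₁ := mem_interior_iff_mem_nhds.2 hU₁
  have hev : ∀ᶠ m in Filter.atTop, s m x₀ ∈ interior U₁ ∧ m ≥ N := by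
    exact ((hpt x₀).eventually (isOpen_interior.mem_nhds hU₁int)).and
      (Filter.eventually_ge_atTop N)
  obtain ⟨M, hM1, hM2⟩ := hev.exists
  -- the final neighbourhood of x₀
  have hV : (s M ⁻¹' interior U₁ ∩ interior K) ∈ nhds x₀ := by
    apply Filter.inter_mem
    · exact (hs_cont M).continuousAt (isOpen_interior.mem_nhds hM1)
    · exact isOpen_interior.mem_nhds (mem_interior_iff_mem_nhds.2 hK)
  refine Filter.mem_of_superset hV ?_
  rintro x ⟨hx1, hx2⟩
  -- show t x ∈ U
  have hxK : x ∈ K := interior_subset hx2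
  set d := add (t x) (smul (-1) (s M x)) with hddef
  have hpd : p d = x := by
    rw [hddef, hp_add (t x) (smul (-1) (s M x)) (by rw [hp_smul, hs_sec, ht_sec]), ht_sec]
  have hn2d : n2 d < ε := by
    rw [hddef, hn2_sym (s M x) (t x) (by rw [hs_sec, ht_sec])]
    exact hN M hM2 x
  have hdO : d ∈ O := htube d hn2d
  have hdU₂ : d ∈ U₂ := by
    rcases hdO with h | h
    · exact interior_subset h
    · exfalso; rw [Set.mem_preimage, hpd] at h; exact h hxK
  have : add (s M x) d ∈ U :=
    key (s M x) d (interior_subset hx1) hdU₂ (by rw [hs_sec, hpd])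
  have heq : add (s M x) d = t x := lemA (s M x) (t x) (by rw [hs_sec, ht_sec])
  rwa [heq] at this
end
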